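/- Let H and V be real Hilbert spaces, let i : H → V be an injective compact continuous linear map with dense range, let a : H × H → ℝ be a continuous symmetric bilinear form, and suppose there exist λ > 0 and α > 0 with a(x,x) + λ⟨i x, i x⟩_V ≥ α‖x‖_H² for all x ∈ H. Define E := { x ∈ H : there exists ρ < 0 such that a(x, y) = ρ ⟨i x, i y⟩_V for all y ∈ H }. Then a is negative definite on the linear span of E: for every nonzero x in span(E) one has a(x, x) < 0. -/

import Mathlib

/-- One half of Lemma A.1 (i): the index form `a` is negative definite on the span of the
set `E` of eigenvectors of `a` with negative eigenvalue relative to the scalar product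
`⟨i·, i·⟩_V`. -/
theorem negative_definite_on_span_of_negative_eigenvectors
    {H V : Type*}
    [NormedAddCommGroup H] [InnerProductSpace ℝ H] [CompleteSpace H]
    [NormedAddCommGroup V] [InnerProductSpace ℝ V] [CompleteSpace V]
    (i : H →L[ℝ] V) (hinj : Function.Injective i)
    (hcomp : IsCompactOperator (⇑i)) (hdense : DenseRange (⇑i))
    (a : H →L[ℝ] H →L[ℝ] ℝ) (hsymm : ∀ x y : H, a x y = a y x)
    (lam α : ℝ) (hlam : 0 < lam) (hα : 0 < α)
    (hcoer : ∀ x : H, α * ‖x‖ ^ 2 ≤ a x x + lam * (inner ℝ (i x) (i x) : ℝ)) :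
    ∀ x ∈ Submodule.span ℝ
        {x : H | ∃ ρ : ℝ, ρ < 0 ∧ ∀ y : H, a x y = ρ * (inner ℝ (i x) (i y) : ℝ)},
      x ≠ 0 → a x x < 0 := by
  classical
  set P : ℝ → H → Prop := fun ρ u => ∀ y : H, a u y = ρ * (inner ℝ (i u) (i y) : ℝ) with hPdef
  have hP0 : ∀ ρ, P ρ 0 := by intro ρ y; simp [hPdef]
  have hPadd : ∀ ρ u v, P ρ u → P ρ v → P ρ (u + v) := by
    intro ρ u v hu hv y
    simp [hPdef, map_add, ContinuousLinearMap.add_apply, hu y, hv y, inner_add_left, mul_add]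
  have hPsmul : ∀ ρ (c : ℝ) u, P ρ u → P ρ (c • u) := by
    intro ρ c u hu y
    simp [hPdef, map_smul, hu y, inner_smul_left]
    ring
  have horthA : ∀ ρ σ u v, ρ ≠ σ → P ρ u → P σ v → a u v = 0 := by
    intro ρ σ u v hne hu hv
    have h1 : a u v = ρ * (inner ℝ (i u) (i v) : ℝ) := hu v
    have h2 : a v u = σ * (inner ℝ (i v) (i u) : ℝ) := hv u
    have h3 : ρ * (inner ℝ (i u) (i v) : ℝ) = σ * (inner ℝ (i u) (i v) : ℝ) := by
      rw [← h1, hsymm u v, h2, real_inner_comm]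
    have hc : (inner ℝ (i u) (i v) : ℝ) = 0 := by
      by_contra hc
      exact hne (mul_right_cancel₀ hc h3)
    rw [h1, hc, mul_zero]
  -- invariant
  set Q : H → Prop := fun x => ∃ s : Finset ℝ, ∃ f : ℝ → H,
      (∀ ρ ∈ s, ρ < 0) ∧ (∀ ρ ∈ s, P ρ (f ρ)) ∧ x = ∑ ρ ∈ s, f ρ with hQdef
  have hspan : ∀ z ∈ Submodule.span ℝ
      {x : H | ∃ ρ : ℝ, ρ < 0 ∧ ∀ y : H, a x y = ρ * (inner ℝ (i x) (i y) : ℝ)}, Q z := by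
    intro z hz
    induction hz using Submodule.span_induction with
    | mem z hz =>
      obtain ⟨ρ, hρ, hz⟩ := hz
      exact ⟨{ρ}, fun _ => z, by simpa using hρ, by simpa [hPdef] using hz, by simp⟩
    | zero => exact ⟨∅, fun _ => 0, by simp, by simp, by simp⟩
    | add u v _ _ hu hv =>
      obtain ⟨s, f, hs, hf, rfl⟩ := hu
      obtain ⟨t, g, ht, hg, rfl⟩ := hv
      refine ⟨s ∪ t, fun ρ => (if ρ ∈ s then f ρ else 0) + (if ρ ∈ t then g ρ else 0),
        ?_, ?_, ?_⟩
      · intro ρ hρ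
        rcases Finset.mem_union.mp hρ with h | h
        · exact hs ρ h
        · exact ht ρ h
      · intro ρ hρ
        apply hPadd
        · split_ifs with h
          · exact hf ρ h
          · exact hP0 ρ
        · split_ifs with h
          · exact hg ρ h
          · exact hP0 ρ
      · rw [Finset.sum_add_distrib]
        congr 1
        · rw [Finset.sum_ite_mem, Finset.union_inter_cancel_left]
        · rw [Finset.sum_ite_mem, Finset.union_inter_cancel_right]
    | smul c u _ hu =>
      obtain ⟨s, f, hs, hf, rfl⟩ := hu
      exact ⟨s, fun ρ => c • f ρ, hs, fun ρ hρ => hPsmul ρ c (f ρ) (hf ρ hρ),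
        by rw [Finset.smul_sum]⟩
  intro x hx hxne
  obtain ⟨s, f, hs, hf, hxeq⟩ := hspan x hx
  have hxx : a x x = ∑ ρ ∈ s, a (f ρ) (f ρ) := by
    rw [hxeq, map_sum a f s, ContinuousLinearMap.sum_apply]
    refine Finset.sum_congr rfl fun ρ hρ => ?_
    rw [map_sum (a (f ρ)) f s]
    exact Finset.sum_eq_single ρ
      (fun σ hσ hne => horthA ρ σ (f ρ) (f σ) (Ne.symm hne) (hf ρ hρ) (hf σ hσ))
      (fun h => absurd hρ h)
  rw [hxx]
  have hex : ∃ ρ ∈ s, f ρ ≠ 0 := by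
    by_contra hcon
    push_neg at hcon
    apply hxne
    rw [hxeq]
    exact Finset.sum_eq_zero hcon
  obtain ⟨ρ₀, hρ₀, hfρ₀⟩ := hex
  have key : ∑ ρ ∈ s, a (f ρ) (f ρ) < ∑ ρ ∈ s, (0 : ℝ) := by
    apply Finset.sum_lt_sum
    · intro ρ hρ
      rw [hf ρ hρ (f ρ)]
      exact mul_nonpos_of_nonpos_of_nonneg (le_of_lt (hs ρ hρ)) real_inner_self_nonneg
    · refine ⟨ρ₀, hρ₀, ?_⟩
      rw [hf ρ₀ hρ₀ (f ρ₀)]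
      have hiz : i (f ρ₀) ≠ 0 := by
        intro h
        exact hfρ₀ (hinj (by rw [h, map_zero]))
      have hpos : (0:ℝ) < inner ℝ (i (f ρ₀)) (i (f ρ₀)) :=
        lt_of_le_of_ne real_inner_self_nonneg
          (Ne.symm (fun h => hiz (inner_self_eq_zero.mp h)))
      exact mul_neg_of_neg_of_pos (hs ρ₀ hρ₀) hpos
  simpa using key
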